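/- For any two vertices i, j in a finite set Λ, the square (u_i·u_j + 1)² = 0 in the Grassmann algebra, where u_i·u_j = -ξ_iη_j - ξ_jη_i - z_iz_j with z_i = 1 - ξ_iη_i. -/
import Mathlib


open ExteriorAlgebra

noncomputable section

/-- Coordinate module carrying the `2n` Grassmann generators. -/
abbrev GrM (n : ℕ) : Type := (Fin n × Bool) → ℝ

/-- The real Grassmann algebra with generators `(ξ i, η i)`. -/
abbrev Gr (n : ℕ) : Type := ExteriorAlgebra ℝ (GrM n)

/-- Generator `ξ i`. -/
def gξ {n : ℕ} (i : Fin n) : Gr n := ι ℝ (Pi.single (i, false) (1 : ℝ))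

/-- Generator `η i`. -/
def gη {n : ℕ} (i : Fin n) : Gr n := ι ℝ (Pi.single (i, true) (1 : ℝ))

/-- `z i = 1 - ξ i * η i`. -/
def gz {n : ℕ} (i : Fin n) : Gr n := 1 - gξ i * gη i

/-- `u i · u j = -ξ i η j - ξ j η i - z i z j`. -/
def udot {n : ℕ} (i j : Fin n) : Gr n := -(gξ i * gη j) - gξ j * gη i - gz i * gz j

/-- Grassmann (left) derivative `∂_{ξ i}`, i.e. left contraction. -/
def dξ {n : ℕ} (i : Fin n) : Module.End ℝ (Gr n) :=
  CliffordAlgebra.contractLeft (Q := (0 : QuadraticForm ℝ (GrM n))) (LinearMap.proj (i, false))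

/-- Grassmann (left) derivative `∂_{η i}`. -/
def dη {n : ℕ} (i : Fin n) : Module.End ℝ (Gr n) :=
  CliffordAlgebra.contractLeft (Q := (0 : QuadraticForm ℝ (GrM n))) (LinearMap.proj (i, true))

/-- The pair `∂_{η i} ∂_{ξ i}`. -/
def pairD {n : ℕ} (i : Fin n) : Module.End ℝ (Gr n) := dη i * dξ i

/-- `∏ i, ∂_{η i} ∂_{ξ i}`. -/
def fullD {n : ℕ} : Module.End ℝ (Gr n) := (List.ofFn (fun i : Fin n => pairD i)).prod

/-- Plain Berezin integral: apply all derivatives, take the scalar (degree-0) part. -/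
def bint {n : ℕ} (G : Gr n) : ℝ := algebraMapInv (fullD G)

/-- Hyperbolic fermionic integral `[G]_0 = ∏ᵢ ∂_{ηᵢ}∂_{ξᵢ} ((∏ᵢ (1+ξᵢηᵢ)) G)`,
using `1/zᵢ = 1 + ξᵢηᵢ`. -/
def sint {n : ℕ} (G : Gr n) : ℝ :=
  bint ((List.ofFn (fun i : Fin n => (1 : Gr n) + gξ i * gη i)).prod * G)

/-- Exponential of a Grassmann element by its terminating power series:
for elements with vanishing degree-0 part, `x ^ (2n+1) = 0`, so the series below is exact. -/
def expG {n : ℕ} (x : Gr n) : Gr n :=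
  ∑ k ∈ Finset.range (2 * n + 1), (k.factorial : ℝ)⁻¹ • x ^ k

/-- For any two vertices `i, j`, `(uᵢ·uⱼ + 1)² = 0` in the
Grassmann algebra, where `uᵢ·uⱼ = -ξᵢηⱼ - ξⱼηᵢ - zᵢzⱼ` and `zᵢ = 1 - ξᵢηᵢ`. -/

private lemma udot_aux (M : Type*) [AddCommGroup M] [Module ℝ M] (va vb vc vd : M) :
    ((ι ℝ va - ι ℝ vc) * (ι ℝ vb - ι ℝ vd) - ι ℝ va * ι ℝ vb * (ι ℝ vc * ι ℝ vd)) ^ 2 = 0 := by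
  have sq : ∀ m : M, ∀ x : ExteriorAlgebra ℝ M,
      ι ℝ m * (ι ℝ m * x) = 0 := by
    intro m x; rw [← mul_assoc, ι_sq_zero, zero_mul]
  have sw : ∀ m m' : M, ∀ x : ExteriorAlgebra ℝ M,
      ι ℝ m' * (ι ℝ m * x) = -(ι ℝ m * (ι ℝ m' * x)) := by
    intro m m' x
    rw [← mul_assoc, eq_neg_of_add_eq_zero_left (ι_add_mul_swap m' m), neg_mul, mul_assoc]
  have sq2 : ∀ m : M, ι ℝ m * ι ℝ m = 0 := ι_sq_zero
  have sw2 : ∀ m m' : M, ι ℝ m' * ι ℝ m = -(ι ℝ m * ι ℝ m') := by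
    intro m m'; exact eq_neg_of_add_eq_zero_left (ι_add_mul_swap m' m)
  noncomm_ring
  simp [mul_assoc, sq, sw va vb, sw va vc, sw va vd, sw vb vc, sw vb vd, sw vc vd,
    sq2, sw2 va vb, sw2 va vc, sw2 va vd, sw2 vb vc, sw2 vb vd, sw2 vc vd]

theorem udot_add_one_sq_eq_zero (n : ℕ) (i j : Fin n) :
    (udot i j + 1) ^ 2 = 0 := by
  have h : udot i j + 1 =
      (gξ i - gξ j) * (gη i - gη j) - gξ i * gη i * (gξ j * gη j) := by
    unfold udot gz; noncomm_ring
  rw [h]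
  exact udot_aux (GrM n) _ _ _ _
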